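/- If v_i and v_r are orthonormal vectors in R^n, P is an n×p real matrix, and the projected vectors satisfy (1-α)‖v_i+v_r‖ ≤ ‖Pᵀv_i + Pᵀv_r‖ ≤ (1+α)‖v_i+v_r‖ and (1-α)‖v_i−v_r‖ ≤ ‖Pᵀv_i − Pᵀv_r‖ ≤ (1+α)‖v_i−v_r‖ for some α ∈ (0,1), then |(Pᵀv_i)ᵀ(Pᵀv_r)| ≤ 2α. -/
import Mathlib

open scoped RealInnerProductSpace Matrix

set_option maxHeartbeats 2000000 in
/-- If `vi, vr` are orthonormal vectors in `ℝ^n`, `P` an `n × p` real matrix, and the projected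
vectors `v̂i = Pᵀ vi`, `v̂r = Pᵀ vr` approximately preserve the norms of `vi + vr` and `vi - vr`
up to distortion `α ∈ (0,1)`, then `|⟪v̂i, v̂r⟫| ≤ 2α`. -/
theorem stmt_0 {n p : ℕ} (vi vr : EuclideanSpace ℝ (Fin n))
    (P : Matrix (Fin n) (Fin p) ℝ) (α : ℝ) (hα : 0 < α) (hα1 : α < 1)
    (hvi : ‖vi‖ = 1) (hvr : ‖vr‖ = 1) (horth : ⟪vi, vr⟫ = 0)
    (vih vrh : EuclideanSpace ℝ (Fin p))
    (hvih : vih = (WithLp.equiv 2 (Fin p → ℝ)).symm (Matrix.mulVec Pᵀ vi))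
    (hvrh : vrh = (WithLp.equiv 2 (Fin p → ℝ)).symm (Matrix.mulVec Pᵀ vr))
    (h1 : (1 - α) * ‖vi + vr‖ ≤ ‖vih + vrh‖) (h2 : ‖vih + vrh‖ ≤ (1 + α) * ‖vi + vr‖)
    (h3 : (1 - α) * ‖vi - vr‖ ≤ ‖vih - vrh‖) (h4 : ‖vih - vrh‖ ≤ (1 + α) * ‖vi - vr‖) :
    |⟪vih, vrh⟫| ≤ 2 * α := by
  have hA : ‖vi + vr‖ ^ 2 = 2 := by
    rw [norm_add_sq_real, hvi, hvr, horth]; ring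
  have hB : ‖vi - vr‖ ^ 2 = 2 := by
    rw [norm_sub_sq_real, hvi, hvr, horth]; ring
  have ha0 : (0:ℝ) ≤ ‖vih + vrh‖ := norm_nonneg _
  have hb0 : (0:ℝ) ≤ ‖vih - vrh‖ := norm_nonneg _
  have hc0 : (0:ℝ) ≤ ‖vi + vr‖ := norm_nonneg _
  have hd0 : (0:ℝ) ≤ ‖vi - vr‖ := norm_nonneg _
  have hα1' : (0:ℝ) ≤ 1 - α := by linarith
  have hA1 : (1 - α) ^ 2 * 2 ≤ ‖vih + vrh‖ ^ 2 := by
    have := mul_self_le_mul_self (by positivity) h1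
    nlinarith
  have hA2 : ‖vih + vrh‖ ^ 2 ≤ (1 + α) ^ 2 * 2 := by
    have := mul_self_le_mul_self ha0 h2
    nlinarith
  have hB1 : (1 - α) ^ 2 * 2 ≤ ‖vih - vrh‖ ^ 2 := by
    have := mul_self_le_mul_self (by positivity) h3
    nlinarith
  have hB2 : ‖vih - vrh‖ ^ 2 ≤ (1 + α) ^ 2 * 2 := by
    have := mul_self_le_mul_self hb0 h4
    nlinarith
  have hpol : ⟪vih, vrh⟫ = (‖vih + vrh‖ ^ 2 - ‖vih - vrh‖ ^ 2) / 4 := by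
    rw [norm_add_sq_real, norm_sub_sq_real]; ring
  rw [hpol, abs_le]
  constructor
  · nlinarith [hA1, hB2]
  · nlinarith [hA2, hB1]
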